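/- Let E be an elliptic curve over an algebraically closed field, p ∈ E a point, and D̄ a divisor of order exactly 2 in the Jacobian of E. Let S = E × E with projections π₁, π₂, and set H = π₁^*(p) + π₂^*(p) and D = π₂^*(D̄). Then for all integers m, n, dim_k H^1(S, O_S(mH + nD)) equals 2 if m = 0 and n is even, and equals 0 otherwise. -/
import Mathlib


/-!
Mathlib does not yet have sheaf cohomology of line bundles on curves, so we
axiomatize the cohomological data of a smooth projective curve of genus 1
(an elliptic curve) over an algebraically closed field `k`: its (closed) points,
divisors (finitely supported `ℤ`-valued functions on points), linear equivalence
of divisors, and the dimensions `h0 D = dim_k H^0(E, O_E(D))`,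
`h1 D = dim_k H^1(E, O_E(D))`, subject to the standard axioms: invariance under
linear equivalence, Riemann–Roch for genus 1, Serre duality (the canonical
divisor of an elliptic curve is trivial), `h^0(O_E) = 1`, and the fact that a
divisor class with a nonzero global section is linearly equivalent to an
effective divisor.
-/

/-- The degree of a divisor: the sum of its coefficients. -/
def divDeg {P : Type*} (D : P →₀ ℤ) : ℤ := D.sum fun _ n => n

/-- Cohomological data of an elliptic curve over an algebraically closed field `k`. -/
structure EllipticCurveCohomology (k : Type*) [Field k] [IsAlgClosed k] where
  /-- the closed points of the curve -/
  Point : Type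
  point_nonempty : Nonempty Point
  /-- `h0 D = dim_k H^0(E, O_E(D))` -/
  h0 : (Point →₀ ℤ) → ℕ
  /-- `h1 D = dim_k H^1(E, O_E(D))` -/
  h1 : (Point →₀ ℤ) → ℕ
  /-- linear equivalence of divisors -/
  LinEquiv : (Point →₀ ℤ) → (Point →₀ ℤ) → Prop
  linEquiv_refl : ∀ D, LinEquiv D D
  linEquiv_symm : ∀ {D D'}, LinEquiv D D' → LinEquiv D' D
  linEquiv_trans : ∀ {D D' D''}, LinEquiv D D' → LinEquiv D' D'' → LinEquiv D D''
  linEquiv_add : ∀ {D D'} (E : Point →₀ ℤ), LinEquiv D D' → LinEquiv (D + E) (D' + E)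
  h0_congr : ∀ {D D'}, LinEquiv D D' → h0 D = h0 D'
  h1_congr : ∀ {D D'}, LinEquiv D D' → h1 D = h1 D'
  degree_congr : ∀ {D D'}, LinEquiv D D' → divDeg D = divDeg D'
  /-- Riemann–Roch on a curve of genus 1 -/
  riemann_roch : ∀ D, (h0 D : ℤ) - h1 D = divDeg D
  /-- Serre duality; the canonical divisor of an elliptic curve is trivial -/
  serre_duality : ∀ D, h1 D = h0 (-D)
  h0_trivial : h0 0 = 1
  /-- a divisor class with a nonzero section is effective -/
  h0_pos_effective : ∀ D, 0 < h0 D →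
    ∃ E : Point →₀ ℤ, (∀ p, 0 ≤ E p) ∧ LinEquiv D E


noncomputable def degHom (P : Type*) : (P →₀ ℤ) →+ ℤ :=
  Finsupp.liftAddHom fun _ => AddMonoidHom.id ℤ

lemma divDeg_eq {P : Type*} (A : P →₀ ℤ) : divDeg A = degHom P A := by
  rw [degHom, Finsupp.liftAddHom_apply]; rfl

lemma divDeg_add {P : Type*} (A B : P →₀ ℤ) : divDeg (A + B) = divDeg A + divDeg B := by
  simp [divDeg_eq, map_add]

lemma divDeg_neg {P : Type*} (A : P →₀ ℤ) : divDeg (-A) = -divDeg A := by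
  simp [divDeg_eq, map_neg]

lemma divDeg_smul {P : Type*} (n : ℤ) (A : P →₀ ℤ) : divDeg (n • A) = n * divDeg A := by
  simp [divDeg_eq, map_zsmul, smul_eq_mul]

lemma divDeg_single {P : Type*} (p : P) (m : ℤ) : divDeg (Finsupp.single p m) = m := by
  simp [divDeg_eq, degHom]

lemma divDeg_nonneg {P : Type*} {A : P →₀ ℤ} (h : ∀ p, 0 ≤ A p) : 0 ≤ divDeg A :=
  Finset.sum_nonneg fun p _ => h p

lemma effective_deg_zero {P : Type*} {A : P →₀ ℤ} (h : ∀ p, 0 ≤ A p)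
    (hd : divDeg A = 0) : A = 0 := by
  ext q
  by_cases hq : q ∈ A.support
  · have := (Finset.sum_eq_zero_iff_of_nonneg (fun p _ => h p)).mp hd q hq
    simpa using this
  · simpa using Finsupp.notMem_support_iff.mp hq

section Aux
variable {k : Type*} [Field k] [IsAlgClosed k] (C : EllipticCurveCohomology k)

lemma h0_eq_zero_of_deg_neg {A : C.Point →₀ ℤ} (hd : divDeg A < 0) : C.h0 A = 0 := by
  by_contra h
  obtain ⟨E, hE, hle⟩ := C.h0_pos_effective A (Nat.pos_of_ne_zero h)
  have := C.degree_congr hle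
  have := divDeg_nonneg hE
  omega

lemma h1_eq_zero_of_deg_pos {A : C.Point →₀ ℤ} (hd : 0 < divDeg A) : C.h1 A = 0 := by
  rw [C.serre_duality]
  exact h0_eq_zero_of_deg_neg C (by rw [divDeg_neg]; omega)

lemma equiv_zero_of_h0_pos_deg_zero {A : C.Point →₀ ℤ} (hd : divDeg A = 0)
    (h : C.h0 A ≠ 0) : C.LinEquiv A 0 := by
  obtain ⟨E, hE, hle⟩ := C.h0_pos_effective A (Nat.pos_of_ne_zero h)
  have hdE : divDeg E = 0 := (C.degree_congr hle).symm.trans hd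
  rw [effective_deg_zero hE hdE] at hle
  exact hle

lemma h0_eq_zero_of_not_equiv {A : C.Point →₀ ℤ} (hd : divDeg A = 0)
    (h : ¬ C.LinEquiv A 0) : C.h0 A = 0 := by
  by_contra hc
  exact h (equiv_zero_of_h0_pos_deg_zero C hd hc)

lemma linEquiv_neg_zero {A : C.Point →₀ ℤ} (h : C.LinEquiv A 0) : C.LinEquiv (-A) 0 := by
  have := C.linEquiv_add (-A) h
  rw [add_neg_cancel, zero_add] at this
  exact C.linEquiv_symm this

lemma linEquiv_nsmul_zero {A : C.Point →₀ ℤ} (h : C.LinEquiv A 0) (j : ℕ) :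
    C.LinEquiv (j • A) 0 := by
  induction j with
  | zero => simpa using C.linEquiv_refl 0
  | succ j ih =>
    have := C.linEquiv_add A ih
    rw [zero_add] at this
    have h2 := C.linEquiv_trans this h
    rw [succ_nsmul]
    exact h2

lemma linEquiv_zsmul_zero {A : C.Point →₀ ℤ} (h : C.LinEquiv A 0) (j : ℤ) :
    C.LinEquiv (j • A) 0 := by
  rcases j with j | j
  · rw [Int.ofNat_eq_coe, natCast_zsmul]; exact linEquiv_nsmul_zero C h j
  · rw [negSucc_zsmul]
    exact linEquiv_neg_zero C (linEquiv_nsmul_zero C h (j + 1))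

end Aux

/-- Let `E` be an elliptic curve over an algebraically closed field,
`p ∈ E` a point, and `D̄` a divisor of order exactly `2` in the Jacobian of `E`
(`D̄ ≁ 0`, `2D̄ ∼ 0`, `deg D̄ = 0`). Let `S = E × E`, `H = π₁^*(p) + π₂^*(p)` and
`D = π₂^*(D̄)`. The function `h1S m n = dim_k H^1(S, O_S(mH + nD))` satisfies, by the
Künneth formula,
`h1S m n = h^0(E, mp)·h^1(E, mp + nD̄) + h^1(E, mp)·h^0(E, mp + nD̄)`.
Then `h1S m n = 2` if `m = 0` and `n` is even, and `h1S m n = 0` otherwise. -/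
theorem h1_of_product_surface
    (k : Type*) [Field k] [IsAlgClosed k] (C : EllipticCurveCohomology k)
    (p : C.Point) (D : C.Point →₀ ℤ) (hdeg : divDeg D = 0)
    (hne : ¬ C.LinEquiv D 0) (htwo : C.LinEquiv (2 • D) 0)
    (h1S : ℤ → ℤ → ℕ)
    (kunneth : ∀ m n : ℤ, h1S m n =
      C.h0 (Finsupp.single p m) * C.h1 (Finsupp.single p m + n • D) +
      C.h1 (Finsupp.single p m) * C.h0 (Finsupp.single p m + n • D)) :
    ∀ m n : ℤ, h1S m n = if m = 0 ∧ Even n then 2 else 0 := by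
  intro m n
  rw [kunneth]
  -- even multiples of D are linearly equivalent to zero
  have heven : ∀ j : ℤ, Even j → C.LinEquiv (j • D) 0 := by
    intro j ⟨r, hr⟩
    have : j • D = r • (2 • D) := by
      rw [two_smul, smul_add, ← add_smul, ← hr]
    rw [this]
    exact linEquiv_zsmul_zero C htwo r
  have hodd : ∀ j : ℤ, ¬ Even j → C.LinEquiv (j • D) D := by
    intro j hj
    have hev : Even (j - 1) := by
      rcases Int.even_or_odd j with h | h
      · exact absurd h hj
      · obtain ⟨r, hr⟩ := h; exact ⟨r, by omega⟩
    have h1 : C.LinEquiv ((j - 1) • D + D) (0 + D) := C.linEquiv_add D (heven (j - 1) hev)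
    have he : (j - 1) • D + D = j • D := by rw [sub_smul, one_smul]; abel
    rw [he, zero_add] at h1
    exact h1
  have hdnD : ∀ j : ℤ, divDeg (j • D) = 0 := by
    intro j; rw [divDeg_smul, hdeg, mul_zero]
  rcases lt_trichotomy m 0 with hm | hm | hm
  · -- m < 0 : h0 of both divisors vanish
    have hd1 : divDeg (Finsupp.single p m) < 0 := by rw [divDeg_single]; exact hm
    have hd2 : divDeg (Finsupp.single p m + n • D) < 0 := by
      rw [divDeg_add, divDeg_single, hdnD]; omega
    rw [h0_eq_zero_of_deg_neg C hd1, h0_eq_zero_of_deg_neg C hd2]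
    simp [hm.ne]
  · -- m = 0
    subst hm
    rw [Finsupp.single_zero, zero_add]
    have hh0 : C.h0 (0 : C.Point →₀ ℤ) = 1 := C.h0_trivial
    have hh1 : C.h1 (0 : C.Point →₀ ℤ) = 1 := by
      rw [C.serre_duality, neg_zero]; exact C.h0_trivial
    by_cases hn : Even n
    · have he := heven n hn
      have he' : C.LinEquiv (-(n • D)) 0 := linEquiv_neg_zero C he
      rw [hh0, hh1, C.h0_congr he, C.serre_duality, C.h0_congr he', C.h0_trivial]
      simp [hn]
    · have h1 : ¬ C.LinEquiv (n • D) 0 := fun h =>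
        hne (C.linEquiv_trans (C.linEquiv_symm (hodd n hn)) h)
      have h2 : ¬ C.LinEquiv (-(n • D)) 0 := by
        intro h
        have : C.LinEquiv ((-n) • D) 0 := by rwa [neg_smul]
        exact hne (C.linEquiv_trans (C.linEquiv_symm (hodd (-n)
          (by simpa [even_neg] using hn))) this)
      rw [hh0, hh1, h0_eq_zero_of_not_equiv C (hdnD n) h1, C.serre_duality,
        h0_eq_zero_of_not_equiv C (by simp [divDeg_neg, hdnD]) h2]
      simp [hn]
  · -- m > 0 : h1 of both divisors vanish
    have hd1 : 0 < divDeg (Finsupp.single p m) := by rw [divDeg_single]; exact hm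
    have hd2 : 0 < divDeg (Finsupp.single p m + n • D) := by
      rw [divDeg_add, divDeg_single, hdnD]; omega
    rw [h1_eq_zero_of_deg_pos C hd1, h1_eq_zero_of_deg_pos C hd2]
    simp [hm.ne']
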